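/- Let 𝔐 be a graph-determined variety of rings. Then for every finite ring R ∈ 𝔐 there exist pairwise distinct primes q₁, …, q_t such that q₁²q₂²⋯q_t²·x = 0 for all x ∈ R; equivalently, there is a squarefree positive integer n with n²·x = 0 for all x ∈ R. -/

import Mathlib

/-- An element of a ring is a (one-sided or two-sided) zero-divisor: it is nonzero and
kills some nonzero element on the left or on the right. -/
def IsZD {R : Type*} [NonUnitalNonAssocRing R] (x : R) : Prop :=
  x ≠ 0 ∧ ∃ y : R, y ≠ 0 ∧ (x * y = 0 ∨ y * x = 0)

/-- The zero-divisor graph `Γ(R)` of a ring `R`: vertices are the nonzero zero-divisors,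
and distinct vertices `x`, `y` are adjacent iff `x*y = 0` or `y*x = 0`. -/
def zdvGraph (R : Type*) [NonUnitalNonAssocRing R] :
    SimpleGraph {x : R // IsZD x} where
  Adj a b := a ≠ b ∧ ((a : R) * (b : R) = 0 ∨ (b : R) * (a : R) = 0)
  symm := by
    constructor
    rintro a b ⟨hne, h⟩
    exact ⟨hne.symm, h.symm⟩
  loopless := by
    constructor
    rintro a ⟨hne, -⟩
    exact hne rfl

/-- A variety of (associative, not necessarily unital or commutative) rings: a class of
rings closed under isomorphisms, subrings, homomorphic images and arbitrary products. -/
structure RingVariety : Type 1 where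
  mem : ∀ (R : Type) [NonUnitalRing R], Prop
  closed_iso : ∀ (R S : Type) [NonUnitalRing R] [NonUnitalRing S],
    (R ≃+* S) → mem R → mem S
  closed_subring : ∀ (R : Type) [NonUnitalRing R] (S : NonUnitalSubring R),
    mem R → mem S
  closed_image : ∀ (R S : Type) [NonUnitalRing R] [NonUnitalRing S] (f : R →ₙ+* S),
    Function.Surjective f → mem R → mem S
  closed_prod : ∀ (ι : Type) (R : ι → Type) [∀ i, NonUnitalRing (R i)],
    (∀ i, mem (R i)) → mem (∀ i, R i)

/-- A variety is graph-determined if any two finite rings in it with isomorphic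
zero-divisor graphs are isomorphic. -/
def GraphDetermined (M : RingVariety) : Prop :=
  ∀ (R S : Type) [NonUnitalRing R] [NonUnitalRing S], Finite R → Finite S →
    M.mem R → M.mem S →
    Nonempty (zdvGraph R ≃g zdvGraph S) → Nonempty (R ≃+* S)

/-- The null ring on an abelian group `A`: all products are zero. -/
def NullRing (A : Type*) := A

instance {A : Type*} [AddCommGroup A] : NonUnitalRing (NullRing A) :=
  { (inferInstance : AddCommGroup A) with
    mul := fun _ _ => (0 : A)
    left_distrib := fun _ _ _ => (add_zero (0 : A)).symm
    right_distrib := fun _ _ _ => (add_zero (0 : A)).symm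
    zero_mul := fun _ => rfl
    mul_zero := fun _ => rfl
    mul_assoc := fun _ _ _ => rfl }


section PW
variable {R : Type*} [NonUnitalRing R]

/-- `pw a n = a^(n+1)` in a non-unital ring. -/
def pw (a : R) : ℕ → R
  | 0 => a
  | n+1 => pw a n * a

lemma pw_succ (a : R) (n : ℕ) : pw a (n+1) = pw a n * a := rfl

lemma pw_add (a : R) (s t : ℕ) : pw a (s + t + 1) = pw a s * pw a t := by
  induction t with
  | zero => rfl
  | succ t ih =>
      have h1 : s + (t+1) + 1 = (s + t + 1) + 1 := by omega
      rw [h1, pw_succ, ih, pw_succ, mul_assoc]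

lemma pw_smul_zero (a : R) (k : ℕ) (h : k • a = 0) : ∀ n, k • pw a n = 0
  | 0 => h
  | n+1 => by rw [pw_succ, ← mul_smul_comm, h, mul_zero]

lemma pw_shift (a : R) (i k : ℕ) (hbase : pw a i = pw a (i + k)) :
    ∀ t, pw a (i + t) = pw a (i + k + t)
  | 0 => hbase
  | t+1 => by
      have h1 : i + (t+1) = (i + t) + 1 := rfl
      have h2 : i + k + (t+1) = (i + k + t) + 1 := rfl
      rw [h1, h2, pw_succ, pw_succ, pw_shift a i k hbase t]

lemma pw_shift_mul (a : R) (i k : ℕ) (hbase : pw a i = pw a (i + k)) :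
    ∀ (c t : ℕ), pw a (i + t) = pw a (i + c * k + t)
  | 0, t => by simp
  | c+1, t => by
      have h1 : i + (c+1) * k + t = i + k + (c * k + t) := by ring
      rw [h1, ← pw_shift a i k hbase (c * k + t)]
      have h2 : i + (c * k + t) = i + c * k + t := by ring
      rw [h2, ← pw_shift_mul a i k hbase c t]

lemma exists_pw_nilpotent_or_idempotent [Finite R] (a : R) :
    (∃ n, pw a n = 0) ∨ (∃ n, pw a n ≠ 0 ∧ pw a n * pw a n = pw a n) := by
  obtain ⟨i, j, hne, heq⟩ : ∃ i j, i ≠ j ∧ pw a i = pw a j := by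
    obtain ⟨i, j, hne, heq⟩ := Finite.exists_ne_map_eq_of_infinite (pw a)
    exact ⟨i, j, hne, heq⟩
  wlog hij : i < j generalizing i j
  · exact this j i hne.symm heq.symm (by omega)
  set k := j - i with hk
  have hk1 : 1 ≤ k := by omega
  have hbase : pw a i = pw a (i + k) := by
    rw [show i + k = j by omega]; exact heq
  -- choose n with k ∣ n + 1 and n ≥ i
  set n := (i + 1) * k - 1 with hn
  have hn1 : n + 1 = (i + 1) * k := by
    have : 1 ≤ (i+1) * k := by nlinarith
    omega
  have hni : i ≤ n := by nlinarith [hn1]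
  have he : pw a n * pw a n = pw a n := by
    have h1 : pw a (n + n + 1) = pw a n * pw a n := pw_add a n n
    have h2 : pw a (n + n + 1) = pw a n := by
      have h3 : n + n + 1 = i + (i + 1) * k + (n - i) := by omega
      have h4 : n = i + (n - i) := by omega
      rw [h3, ← pw_shift_mul a i k hbase (i+1) (n - i), ← h4]
    rw [← h1, h2]
  by_cases h0 : pw a n = 0
  · exact Or.inl ⟨n, h0⟩
  · exact Or.inr ⟨n, h0, he⟩

end PW

lemma squarefree_prod_primes {s : Finset ℕ} (hs : ∀ p ∈ s, p.Prime) :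
    Squarefree (∏ p ∈ s, p) := by
  classical
  induction s using Finset.induction_on with
  | empty => simpa using squarefree_one
  | @insert q s' hq ih =>
      rw [Finset.prod_insert hq]
      rw [Nat.squarefree_mul_iff]
      have hqp : q.Prime := hs q (Finset.mem_insert_self q s')
      refine ⟨?_, hqp.squarefree, ih fun p hp => hs p (Finset.mem_insert_of_mem hp)⟩
      refine Nat.Coprime.prod_right fun p hp => ?_
      have hpp := hs p (Finset.mem_insert_of_mem hp)
      exact (Nat.coprime_primes hqp hpp).mpr (by rintro rfl; exact hq hp)

section ZMul
variable {R : Type*} [NonUnitalRing R]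

/-- The subring consisting of integer multiples of an element `x` with `x * x ∈ ℤ•x`. -/
def zmulSub (x : R) (hx : ∃ k : ℤ, x * x = k • x) : NonUnitalSubring R where
  carrier := (AddSubgroup.zmultiples x : Set R)
  zero_mem' := zero_mem _
  add_mem' := fun ha hb => add_mem ha hb
  neg_mem' := fun ha => neg_mem ha
  mul_mem' := by
    intro u v hu hv
    obtain ⟨m, rfl⟩ := AddSubgroup.mem_zmultiples_iff.mp hu
    obtain ⟨n, rfl⟩ := AddSubgroup.mem_zmultiples_iff.mp hv
    obtain ⟨k, hk⟩ := hx
    refine AddSubgroup.mem_zmultiples_iff.mpr ⟨m * n * k, ?_⟩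
    rw [smul_mul_assoc, mul_smul_comm, hk, smul_smul, smul_smul, mul_assoc]

lemma mem_zmulSub_self (x : R) (hx : ∃ k : ℤ, x * x = k • x) : x ∈ zmulSub x hx :=
  AddSubgroup.mem_zmultiples x

lemma mem_zmulSub_iff {x : R} {hx : ∃ k : ℤ, x * x = k • x} {y : R} :
    y ∈ zmulSub x hx ↔ ∃ k : ℤ, k • x = y := AddSubgroup.mem_zmultiples_iff

lemma card_zmulSub (x : R) (hx : ∃ k : ℤ, x * x = k • x) :
    Nat.card (zmulSub x hx) = addOrderOf x := by
  rw [← Nat.card_zmultiples x]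
  exact Nat.card_congr (Equiv.subtypeEquivRight fun y => Iff.rfl)

end ZMul

section IdealCon
variable {R : Type*} [NonUnitalRing R]

/-- Congruence on a subring `S` given by differences lying in integer multiples of `c`. -/
def idealCon (S : NonUnitalSubring R) (c : R)
    (hL : ∀ t ∈ S, ∃ k : ℤ, t * c = k • c) (hR : ∀ t ∈ S, ∃ k : ℤ, c * t = k • c) :
    RingCon S where
  r u v := ∃ k : ℤ, (u : R) - v = k • c
  iseqv := by
    refine ⟨fun u => ⟨0, by simp⟩, fun {u v} ⟨k, hk⟩ => ⟨-k, ?_⟩, fun {u v w} ⟨k, hk⟩ ⟨l, hl⟩ => ⟨k + l, ?_⟩⟩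
    · rw [neg_smul, ← hk]; abel
    · rw [add_smul, ← hk, ← hl]; abel
  add' := by
    rintro u v u' v' ⟨k, hk⟩ ⟨l, hl⟩
    refine ⟨k + l, ?_⟩
    push_cast
    rw [add_smul, ← hk, ← hl]; abel
  mul' := by
    rintro w x y z ⟨k, hk⟩ ⟨l, hl⟩
    obtain ⟨k₁, hk₁⟩ := hL (w : R) w.2
    obtain ⟨k₂, hk₂⟩ := hR (z : R) z.2
    refine ⟨l * k₁ + k * k₂, ?_⟩
    push_cast
    have : (w : R) * y - (x : R) * z = (w : R) * ((y : R) - z) + ((w : R) - x) * z := by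
      rw [mul_sub, sub_mul]; abel
    rw [this, hk, hl, mul_smul_comm, smul_mul_assoc, hk₁, hk₂, smul_smul, smul_smul, add_smul]

/-- The quotient map as a non-unital ring hom. -/
def idealConHom (S : NonUnitalSubring R) (c : R)
    (hL : ∀ t ∈ S, ∃ k : ℤ, t * c = k • c) (hR : ∀ t ∈ S, ∃ k : ℤ, c * t = k • c) :
    S →ₙ+* (idealCon S c hL hR).Quotient where
  toFun := fun u => (u : (idealCon S c hL hR).Quotient)
  map_mul' := fun _ _ => rfl
  map_add' := fun _ _ => rfl
  map_zero' := rfl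

lemma idealConHom_surjective (S : NonUnitalSubring R) (c : R) (hL) (hR) :
    Function.Surjective (idealConHom S c hL hR) :=
  fun q => Quotient.inductionOn' q fun u => ⟨u, rfl⟩

lemma idealCon_eq_zero_iff (S : NonUnitalSubring R) (c : R) (hL) (hR) (u : S) :
    (u : (idealCon S c hL hR).Quotient) = 0 ↔ ∃ k : ℤ, (u : R) = k • c := by
  have h0 : (0 : (idealCon S c hL hR).Quotient) = ((0 : S) : (idealCon S c hL hR).Quotient) :=
    rfl
  rw [h0, RingCon.eq]
  show (∃ k : ℤ, (u : R) - ((0 : S) : R) = k • c) ↔ _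
  simp
end IdealCon

section Variety

/-- The trivial (zero) ring, obtained as an empty product; it lies in every variety. -/
abbrev ZeroRing : Type := ∀ _ : Empty, PUnit.{1}

lemma zeroRing_mem (M : RingVariety) : M.mem ZeroRing :=
  M.closed_prod Empty (fun _ => PUnit.{1}) (fun i => i.elim)

/-- In a graph-determined variety, a finite member without zero-divisors is trivial. -/
lemma subsingleton_of_noZD (M : RingVariety) (hgd : GraphDetermined M)
    (D : Type) [NonUnitalRing D] (hfin : Finite D) (hmem : M.mem D)
    (hnz : ∀ x : D, ¬ IsZD x) : Subsingleton D := by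
  haveI h1 : IsEmpty {x : D // IsZD x} := ⟨fun v => hnz v.1 v.2⟩
  haveI h2 : IsEmpty {x : ZeroRing // IsZD x} :=
    ⟨fun v => v.2.1 (Subsingleton.elim _ _)⟩
  have iso : zdvGraph D ≃g zdvGraph ZeroRing :=
    ⟨Equiv.equivOfIsEmpty _ _, fun {a b} => isEmptyElim a⟩
  obtain ⟨e⟩ := hgd D ZeroRing hfin (Finite.of_subsingleton) hmem (zeroRing_mem M) ⟨iso⟩
  exact ⟨fun u v => e.injective (Subsingleton.elim _ _)⟩

/-- Two finite null rings of the same cardinality have isomorphic zero-divisor graphs. -/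
lemma nullGraphIso (A B : Type) [NonUnitalRing A] [NonUnitalRing B] [Finite A] [Finite B]
    (hA : ∀ u v : A, u * v = 0) (hB : ∀ u v : B, u * v = 0)
    (hcard : Nat.card A = Nat.card B) : Nonempty (zdvGraph A ≃g zdvGraph B) := by
  classical
  haveI : Fintype A := Fintype.ofFinite A
  haveI : Fintype B := Fintype.ofFinite B
  have vA : ∀ y : A, IsZD y ↔ ¬ (y = 0) := fun y =>
    ⟨fun h => h.1, fun h => ⟨h, y, h, Or.inl (hA y y)⟩⟩
  have vB : ∀ y : B, IsZD y ↔ ¬ (y = 0) := fun y =>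
    ⟨fun h => h.1, fun h => ⟨h, y, h, Or.inl (hB y y)⟩⟩
  have cA : Fintype.card {y : A // IsZD y} = Fintype.card A - 1 := by
    rw [Fintype.card_congr (Equiv.subtypeEquivRight vA), Fintype.card_subtype_compl,
      Fintype.card_subtype_eq (0 : A)]
  have cB : Fintype.card {y : B // IsZD y} = Fintype.card B - 1 := by
    rw [Fintype.card_congr (Equiv.subtypeEquivRight vB), Fintype.card_subtype_compl,
      Fintype.card_subtype_eq (0 : B)]
  have hAB : Fintype.card A = Fintype.card B := by
    rw [← Nat.card_eq_fintype_card, ← Nat.card_eq_fintype_card, hcard]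
  have hc : Fintype.card {y : A // IsZD y} = Fintype.card {y : B // IsZD y} := by
    rw [cA, cB, hAB]
  refine ⟨⟨Fintype.equivOfCardEq hc, ?_⟩⟩
  intro a b
  show (_ ≠ _ ∧ _) ↔ (_ ≠ _ ∧ _)
  constructor
  · rintro ⟨hne, -⟩
    exact ⟨fun h => hne (congrArg _ h), Or.inl (hA _ _)⟩
  · rintro ⟨hne, -⟩
    refine ⟨fun h => hne ?_, Or.inl (hB _ _)⟩
    exact (Fintype.equivOfCardEq hc).injective h
end Variety

section Contra

lemma nsmul_zsmul_nsmul_zero {R : Type*} [NonUnitalRing R] (a : R) (k : ℤ) (n m : ℕ)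
    (h : ((n * m : ℕ)) • a = 0) : (n : ℕ) • (k • ((m : ℕ) • a)) = 0 := by
  rw [← natCast_zsmul a m, ← natCast_zsmul _ n, smul_smul, smul_smul,
    show (n:ℤ) * k * (m:ℤ) = k * ((n*m : ℕ) : ℤ) by push_cast; ring,
    ← smul_smul, natCast_zsmul, h, smul_zero]

/-- A graph-determined variety contains no finite null ring with an element of
additive order `p²`. -/
lemma null_p2_contra (M : RingVariety) (hgd : GraphDetermined M) (p : ℕ) (hp : p.Prime)
    (Q : Type) [NonUnitalRing Q] (hfin : Finite Q) (hmem : M.mem Q)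
    (hnull : ∀ u v : Q, u * v = 0) (x : Q) (hpx : p • x ≠ 0) (hp2x : (p * p) • x = 0) :
    False := by
  classical
  have hx : ∃ k : ℤ, x * x = k • x := ⟨0, by rw [hnull]; simp⟩
  have hx' : ∃ k : ℤ, (p • x) * (p • x) = k • (p • x) := ⟨0, by rw [hnull]; simp⟩
  set A := zmulSub x hx with hA
  set C := zmulSub (p • x) hx' with hC
  -- additive orders
  have hordx : addOrderOf x = p * p := by
    have hdvd : addOrderOf x ∣ p ^ 2 :=
      addOrderOf_dvd_iff_nsmul_eq_zero.mpr (by rw [pow_two]; exact hp2x)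
    obtain ⟨i, hi, he⟩ := (Nat.dvd_prime_pow hp).mp hdvd
    interval_cases i
    · rw [pow_zero] at he
      exact absurd (by rw [AddMonoid.addOrderOf_eq_one_iff.mp he, smul_zero]) hpx
    · rw [pow_one] at he
      exact absurd (addOrderOf_dvd_iff_nsmul_eq_zero.mp (he ▸ dvd_rfl)) hpx
    · rw [he, pow_two]
  have hordpx : addOrderOf (p • x) = p := by
    have hdvd : addOrderOf (p • x) ∣ p :=
      addOrderOf_dvd_iff_nsmul_eq_zero.mpr (by rw [smul_smul]; exact hp2x)
    rcases (Nat.Prime.eq_one_or_self_of_dvd hp _ hdvd) with h1 | h1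
    · exact absurd (AddMonoid.addOrderOf_eq_one_iff.mp h1) hpx
    · exact h1
  -- the two rings
  have hmemA : M.mem A := M.closed_subring Q A hmem
  have hmemC : M.mem C := M.closed_subring Q C hmem
  have hmemB : M.mem (∀ _ : Bool, C) := M.closed_prod Bool (fun _ => C) (fun _ => hmemC)
  have hA0 : ∀ u v : A, u * v = 0 := fun u v => Subtype.ext (hnull u v)
  have hB0 : ∀ u v : (∀ _ : Bool, C), u * v = 0 := fun u v =>
    funext fun i => Subtype.ext (hnull (u i) (v i))
  have hcardA : Nat.card A = p * p := by rw [hA, card_zmulSub, hordx]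
  have hcardC : Nat.card C = p := by rw [hC, card_zmulSub, hordpx]
  have hcardB : Nat.card (∀ _ : Bool, C) = p * p := by
    rw [Nat.card_pi]
    simp [hcardC, pow_two]
  obtain ⟨e⟩ := hgd A (∀ _ : Bool, C) inferInstance inferInstance hmemA hmemB
    (nullGraphIso _ _ hA0 hB0 (by rw [hcardA, hcardB]))
  -- contradiction via additive orders
  set xh : A := ⟨x, mem_zmulSub_self x hx⟩ with hxh
  have hBp : ∀ y : (∀ _ : Bool, C), p • y = 0 := by
    intro y
    funext i
    show p • (y i) = 0
    obtain ⟨k, hk⟩ := mem_zmulSub_iff.mp (y i).2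
    apply Subtype.ext
    show p • ((y i : Q)) = 0
    rw [← hk]
    exact nsmul_zsmul_nsmul_zero x k p p hp2x
  have h2 : e (p • xh) = 0 := by rw [map_nsmul]; exact hBp _
  have h3 : p • xh = 0 := e.injective (by rw [h2, map_zero])
  exact hpx (congrArg Subtype.val h3)

/-- A graph-determined variety contains no finite ring with a nonzero idempotent of
additive order a power of a prime `p`. -/
lemma idempotent_contra (M : RingVariety) (hgd : GraphDetermined M) (p : ℕ) (hp : p.Prime)
    (R : Type) [NonUnitalRing R] (hfin : Finite R) (hmem : M.mem R)
    (e : R) (he : e ≠ 0) (hee : e * e = e) (hp3 : (p ^ 3) • e = 0) : False := by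
  classical
  have hx : ∃ k : ℤ, e * e = k • e := ⟨1, by rw [hee, one_smul]⟩
  set C := zmulSub e hx with hC
  have hpord : (p : ℤ) ∣ (addOrderOf e : ℤ) := by
    have hdvd : addOrderOf e ∣ p ^ 3 := addOrderOf_dvd_iff_nsmul_eq_zero.mpr hp3
    obtain ⟨i, hi, hie⟩ := (Nat.dvd_prime_pow hp).mp hdvd
    rcases Nat.eq_zero_or_pos i with h0 | h0
    · exact absurd (AddMonoid.addOrderOf_eq_one_iff.mp (by rw [hie, h0, pow_zero])) he
    · exact_mod_cast (hie ▸ dvd_pow_self p (by omega) : p ∣ addOrderOf e)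
  have hL : ∀ t ∈ C, ∃ k : ℤ, t * ((p : ℤ) • e) = k • ((p : ℤ) • e) := by
    intro t ht
    obtain ⟨m, hm⟩ := mem_zmulSub_iff.mp ht
    exact ⟨m, by rw [← hm, smul_mul_assoc, mul_smul_comm, hee, smul_comm]⟩
  have hR : ∀ t ∈ C, ∃ k : ℤ, ((p : ℤ) • e) * t = k • ((p : ℤ) • e) := by
    intro t ht
    obtain ⟨m, hm⟩ := mem_zmulSub_iff.mp ht
    exact ⟨m, by rw [← hm, smul_mul_assoc, mul_smul_comm, hee, smul_comm]⟩
  set con := idealCon C ((p : ℤ) • e) hL hR with hcon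
  set f := idealConHom C ((p : ℤ) • e) hL hR with hf
  have hsurj := idealConHom_surjective C ((p : ℤ) • e) hL hR
  haveI hfinQ : Finite con.Quotient := Finite.of_surjective f hsurj
  have hmemQ : M.mem con.Quotient := M.closed_image C con.Quotient f hsurj
    (M.closed_subring R C hmem)
  -- `mk u = 0` criterion
  have hzero : ∀ u : C, (idealConHom C ((p : ℤ) • e) hL hR u = 0 ↔
      ∃ k : ℤ, (u : R) = (k * p) • e) := by
    intro u
    show ((u : (idealCon C ((p : ℤ) • e) hL hR).Quotient) = 0 ↔ _)
    rw [idealCon_eq_zero_iff]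
    constructor
    · rintro ⟨k, hk⟩; exact ⟨k, by rw [hk, smul_smul]⟩
    · rintro ⟨k, hk⟩; exact ⟨k, by rw [hk, smul_smul]⟩
  -- no zero divisors in the quotient
  have hnz : ∀ q : con.Quotient, ¬ IsZD q := by
    rintro q ⟨hq0, q', hq'0, hzd⟩
    obtain ⟨u, rfl⟩ := hsurj q
    obtain ⟨u', rfl⟩ := hsurj q'
    obtain ⟨m, hm⟩ := mem_zmulSub_iff.mp u.2
    obtain ⟨m', hm'⟩ := mem_zmulSub_iff.mp u'.2
    have key : ∀ (v w : C) (mv mw : ℤ), (v : R) = mv • e → (w : R) = mw • e →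
        idealConHom C ((p : ℤ) • e) hL hR v ≠ 0 →
        idealConHom C ((p : ℤ) • e) hL hR w ≠ 0 →
        (idealConHom C ((p : ℤ) • e) hL hR v) * (idealConHom C ((p : ℤ) • e) hL hR w) = 0 →
        False := by
      intro v w mv mw hv hw hv0 hw0 hvw
      have hmul : ((v * w : C) : R) = (mv * mw) • e := by
        show ((v : R) * w) = (mv * mw) • e
        rw [hv, hw, smul_mul_assoc, mul_smul_comm, hee, smul_smul]
      obtain ⟨k, hk⟩ := (hzero (v * w)).mp (by rw [map_mul]; exact hvw)
      rw [hmul] at hk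
      have hdvd : (addOrderOf e : ℤ) ∣ (mv * mw - k * p) :=
        addOrderOf_dvd_iff_zsmul_eq_zero.mpr (by rw [sub_smul, hk, sub_self])
      have hpmm' : (p : ℤ) ∣ mv * mw := by
        have h2 := dvd_add (hpord.trans hdvd) (dvd_mul_left (p : ℤ) k)
        simpa using h2
      rcases (Int.Prime.dvd_mul' (by exact_mod_cast hp) hpmm') with hm1 | hm1
      · obtain ⟨c, hc⟩ := hm1
        apply hv0
        rw [hzero]
        exact ⟨c, by rw [hv, hc, mul_comm]⟩
      · obtain ⟨c, hc⟩ := hm1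
        apply hw0
        rw [hzero]
        exact ⟨c, by rw [hw, hc, mul_comm]⟩
    rcases hzd with h | h
    · exact key u u' m m' hm.symm hm'.symm hq0 hq'0 h
    · exact key u' u m' m hm'.symm hm.symm hq'0 hq0 h
  haveI hsub : Subsingleton con.Quotient :=
    subsingleton_of_noZD M hgd con.Quotient hfinQ hmemQ hnz
  have h0 : idealConHom C ((p : ℤ) • e) hL hR ⟨e, mem_zmulSub_self e hx⟩ = 0 :=
    Subsingleton.elim _ _
  obtain ⟨k, hk⟩ := (hzero _).mp h0
  have hdvd : (addOrderOf e : ℤ) ∣ (1 - k * p) :=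
    addOrderOf_dvd_iff_zsmul_eq_zero.mpr
      (by rw [sub_smul, one_smul, ← hk]; exact sub_self e)
  have h1 : (p : ℤ) ∣ 1 := by
    simpa using dvd_add (hpord.trans hdvd) (dvd_mul_left (p : ℤ) k)
  have h2 := Int.le_of_dvd one_pos h1
  have h3 := hp.one_lt
  omega

end Contra

theorem finite_ring_in_graphDetermined_char (M : RingVariety) (hgd : GraphDetermined M)
    (R : Type) [NonUnitalRing R] (hfin : Finite R) (hmem : M.mem R) :
    ∃ n : ℕ, 0 < n ∧ Squarefree n ∧ ∀ x : R, n ^ 2 • x = 0 := by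
  classical
  haveI := hfin
  haveI : Fintype R := Fintype.ofFinite R
  by_contra hcon
  push_neg at hcon
  set m := Fintype.card R with hm
  have hm0 : m ≠ 0 := Fintype.card_ne_zero
  set n := ∏ q ∈ m.primeFactors, q with hn
  have hsf : Squarefree n :=
    squarefree_prod_primes fun q hq => Nat.prime_of_mem_primeFactors hq
  have hnpos : 0 < n := Nat.pos_of_ne_zero hsf.ne_zero
  obtain ⟨x, hx⟩ := hcon n hnpos hsf
  set d := addOrderOf x with hd
  have hd0 : d ≠ 0 := (addOrderOf_pos x).ne'
  have hddvd : d ∣ m := addOrderOf_dvd_card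
  have hnd : ¬ d ∣ n ^ 2 := fun h => hx (addOrderOf_dvd_iff_nsmul_eq_zero.mp h)
  have hn2 : (n ^ 2) ≠ 0 := pow_ne_zero _ hsf.ne_zero
  obtain ⟨p, hplt⟩ : ∃ p, (n ^ 2).factorization p < d.factorization p := by
    by_contra hno
    push_neg at hno
    exact hnd ((Nat.factorization_le_iff_dvd hd0 hn2).mp (Finsupp.le_def.mpr hno))
  have hp : p.Prime := by
    have hne : d.factorization p ≠ 0 := by omega
    exact Nat.prime_of_mem_primeFactors
      (Nat.support_factorization d ▸ Finsupp.mem_support_iff.mpr hne)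
  have hpm : p ∣ m := (Nat.dvd_of_factorization_pos (by omega : d.factorization p ≠ 0)).trans hddvd
  have hpn : p ∣ n := Finset.dvd_prod_of_mem _ (Nat.mem_primeFactors.mpr ⟨hp, hpm, hm0⟩)
  have hfn : n.factorization p = 1 :=
    le_antisymm (hsf.natFactorization_le_one p) (by
      rw [← Nat.Prime.pow_dvd_iff_le_factorization hp hsf.ne_zero, pow_one]
      exact hpn)
  have hd3 : p ^ 3 ∣ d := by
    rw [Nat.Prime.pow_dvd_iff_le_factorization hp hd0]
    have h2 : (n ^ 2).factorization p = 2 := by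
      rw [Nat.factorization_pow]
      simp [hfn]
    omega
  -- an element of additive order p³
  set a := (d / p ^ 3) • x with ha
  have hdiv0 : d / p ^ 3 ≠ 0 := by
    have h1 := Nat.div_pos (Nat.le_of_dvd (Nat.pos_of_ne_zero hd0) hd3) (pow_pos hp.pos 3)
    omega
  have horda : addOrderOf a = p ^ 3 := by
    rw [ha, addOrderOf_nsmul' x hdiv0, ← hd, Nat.gcd_eq_right (Nat.div_dvd_of_dvd hd3),
      Nat.div_div_self hd3 hd0]
  have hp3a : (p ^ 3) • a = 0 := by rw [← horda]; exact addOrderOf_nsmul_eq_zero a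
  have hp2a : (p ^ 2) • a ≠ 0 := by
    intro h
    have h1 := addOrderOf_dvd_iff_nsmul_eq_zero.mpr h
    rw [horda] at h1
    have h2 := (Nat.pow_dvd_pow_iff_le_right hp.one_lt).mp h1
    omega
  rcases exists_pw_nilpotent_or_idempotent a with ⟨N, hN⟩ | ⟨n₀, hn0, hid⟩
  · -- `a` nilpotent
    clear_value a
    set b := p • a with hb
    clear_value b
    have h3z : ∀ y : R, (p ^ 3) • (a * y) = 0 := fun y => by
      rw [← smul_mul_assoc, hp3a, zero_mul]
    have hb2 : b * b = (p * p) • (a * a) := by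
      rw [hb, smul_mul_assoc, mul_smul_comm, smul_smul]
    have hbb' : b * (b * b) = 0 := by
      rw [hb2, hb, smul_mul_assoc, mul_smul_comm, smul_smul,
        show p * (p * p) = p ^ 3 by ring]
      exact h3z _
    have haa3 : (p ^ 3) • ((a * a) * a) = 0 := by
      rw [← smul_mul_assoc, h3z a, zero_mul]
    have haa4 : (p ^ 3) • ((a * a) * (a * a)) = 0 := by
      rw [← smul_mul_assoc, h3z a, zero_mul]
    have hb'b : (b * b) * b = 0 := by
      rw [hb2, hb, smul_mul_assoc, mul_smul_comm, smul_smul,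
        show p * p * p = p ^ 3 by ring]
      exact haa3
    have hb'b' : (b * b) * (b * b) = 0 := by
      rw [hb2, smul_mul_assoc, mul_smul_comm, smul_smul,
        show p * p * (p * p) = p * p ^ 3 by ring, ← smul_smul]
      rw [haa4, smul_zero]
    have hprod : ∀ (m₁ n₁ m₂ n₂ : ℤ),
        (m₁ • b + n₁ • (b * b)) * (m₂ • b + n₂ • (b * b)) = (m₁ * m₂) • (b * b) := by
      intro m₁ n₁ m₂ n₂
      rw [add_mul, mul_add, mul_add]
      simp only [smul_mul_assoc, mul_smul_comm, smul_smul, hbb', hb'b, hb'b',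
        smul_zero, add_zero, zero_add]
      rw [mul_comm m₂ m₁]
    -- the subring generated by b and b*b
    let T : NonUnitalSubring R :=
      { carrier := {y | ∃ m₁ n₁ : ℤ, y = m₁ • b + n₁ • (b * b)}
        zero_mem' := ⟨0, 0, by simp⟩
        add_mem' := by
          rintro u v ⟨m₁, n₁, rfl⟩ ⟨m₂, n₂, rfl⟩
          exact ⟨m₁ + m₂, n₁ + n₂, by rw [add_smul, add_smul]; abel⟩
        neg_mem' := by
          rintro u ⟨m₁, n₁, rfl⟩
          exact ⟨-m₁, -n₁, by rw [neg_smul, neg_smul, ← neg_add]⟩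
        mul_mem' := by
          rintro u v ⟨m₁, n₁, rfl⟩ ⟨m₂, n₂, rfl⟩
          exact ⟨0, m₁ * m₂, by rw [hprod, zero_smul, zero_add]⟩ }
    have hbT : b ∈ T := ⟨1, 0, by simp⟩
    have hLT : ∀ t ∈ T, ∃ k : ℤ, t * (b * b) = k • (b * b) := by
      rintro t ⟨m₁, n₁, rfl⟩
      exact ⟨0, by rw [add_mul, smul_mul_assoc, smul_mul_assoc, hbb', hb'b',
        smul_zero, smul_zero, add_zero, zero_smul]⟩
    have hRT : ∀ t ∈ T, ∃ k : ℤ, (b * b) * t = k • (b * b) := by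
      rintro t ⟨m₁, n₁, rfl⟩
      exact ⟨0, by rw [mul_add, mul_smul_comm, mul_smul_comm, hb'b, hb'b',
        smul_zero, smul_zero, add_zero, zero_smul]⟩
    have hsurj := idealConHom_surjective T (b * b) hLT hRT
    haveI hfinQ : Finite (idealCon T (b * b) hLT hRT).Quotient :=
      Finite.of_surjective _ hsurj
    have hmemQ : M.mem (idealCon T (b * b) hLT hRT).Quotient :=
      M.closed_image T _ (idealConHom T (b * b) hLT hRT) hsurj (M.closed_subring R T hmem)
    have hzeroT : ∀ u : T, (idealConHom T (b * b) hLT hRT u = 0 ↔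
        ∃ k : ℤ, (u : R) = k • (b * b)) := by
      intro u
      show ((u : (idealCon T (b * b) hLT hRT).Quotient) = 0 ↔ _)
      rw [idealCon_eq_zero_iff]
    have hnullQ : ∀ u v : (idealCon T (b * b) hLT hRT).Quotient, u * v = 0 := by
      intro u v
      obtain ⟨s, rfl⟩ := hsurj u
      obtain ⟨t, rfl⟩ := hsurj v
      rw [← map_mul, hzeroT (s * t)]
      obtain ⟨m₁, n₁, hs⟩ := s.2
      obtain ⟨m₂, n₂, ht⟩ := t.2
      refine ⟨m₁ * m₂, ?_⟩
      show ((s : R) * t) = _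
      rw [hs, ht, hprod]
    set xQ := idealConHom T (b * b) hLT hRT ⟨b, hbT⟩ with hxQ
    have hp2xQ : (p * p) • xQ = 0 := by
      rw [hxQ, ← map_nsmul]
      have hz : ((p * p) • (⟨b, hbT⟩ : T)) = 0 := by
        apply Subtype.ext
        show (p * p) • b = 0
        rw [hb, smul_smul, show p * p * p = p ^ 3 by ring, hp3a]
      rw [hz, map_zero]
    by_cases hpxQ : p • xQ = 0
    · have h1 : idealConHom T (b * b) hLT hRT (p • (⟨b, hbT⟩ : T)) = 0 := by
        rw [map_nsmul, ← hxQ]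
        exact hpxQ
      obtain ⟨k, hk⟩ := (hzeroT _).mp h1
      have hk' : (p : ℕ) • b = k • (b * b) := hk
      have L : ∀ j : ℕ, (p ^ 2) • pw a j = k • ((p ^ 2) • pw a (j + 1)) := by
        have L0 : (p ^ 2) • pw a 0 = k • ((p ^ 2) • pw a 1) := by
          show (p ^ 2) • a = k • ((p ^ 2) • (a * a))
          rw [pow_two, ← smul_smul, ← hb, hk', hb2, ← pow_two]
        intro j
        induction j with
        | zero => exact L0
        | succ j ih =>
            have e1 : (p ^ 2) • pw a (j + 1) = ((p ^ 2) • pw a j) * a := by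
              rw [pw_succ, smul_mul_assoc]
            have e2 : (p ^ 2) • pw a (j + 2) = ((p ^ 2) • pw a (j + 1)) * a := by
              rw [pw_succ, smul_mul_assoc]
            rw [e1, ih, smul_mul_assoc, ← e2]
      have E : ∀ t : ℕ, (p ^ 2) • pw a 0 = (k ^ t) • ((p ^ 2) • pw a t) := by
        intro t
        induction t with
        | zero => simp
        | succ t ih => rw [ih, L t, smul_smul, ← pow_succ]
      have hE := E N
      rw [hN, smul_zero, smul_zero] at hE
      exact hp2a hE
    · exact null_p2_contra M hgd p hp _ hfinQ hmemQ hnullQ xQ hpxQ hp2xQ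
  · exact idempotent_contra M hgd p hp R hfin hmem (pw a n₀) hn0 hid
      (pw_smul_zero a (p ^ 3) hp3a n₀)
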